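/- Let N ≥ 3 and let u, v be positive C² functions on (0, R) with u', v' < 0, solving u'' + ((N-1)/r)u' + v(r)^p/λ = 0 and v'' + ((N-1)/r)v' + u(r)^q/λ = 0 on a subinterval where both u'' < 0 and v'' < 0. Define E(r) = r^N (u'v' + v^{p+1}/(λ(p+1)) + u^{q+1}/(λ(q+1)) + (N/(p+1)) v u'/r + (N/(q+1)) u v'/r). Then E'(r) = r^{N-1} u'(r) v'(r) (N/(p+1) + N/(q+1) - (N-2)) on that subinterval. -/

import Mathlib

theorem stmt_17 (N : ℕ) (hN : 3 ≤ N) (lam p q a b : ℝ)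
    (hlam : 0 < lam) (hp : 0 < p) (hq : 0 < q) (ha : 0 < a) (hab : a < b)
    (u v u' v' u'' v'' : ℝ → ℝ)
    (hu : ∀ r ∈ Set.Ioo a b, HasDerivAt u (u' r) r)
    (hu' : ∀ r ∈ Set.Ioo a b, HasDerivAt u' (u'' r) r)
    (hv : ∀ r ∈ Set.Ioo a b, HasDerivAt v (v' r) r)
    (hv' : ∀ r ∈ Set.Ioo a b, HasDerivAt v' (v'' r) r)
    (hupos : ∀ r ∈ Set.Ioo a b, 0 < u r) (hvpos : ∀ r ∈ Set.Ioo a b, 0 < v r)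
    (hu'neg : ∀ r ∈ Set.Ioo a b, u' r < 0) (hv'neg : ∀ r ∈ Set.Ioo a b, v' r < 0)
    (hu''neg : ∀ r ∈ Set.Ioo a b, u'' r < 0) (hv''neg : ∀ r ∈ Set.Ioo a b, v'' r < 0)
    (hODEu : ∀ r ∈ Set.Ioo a b, u'' r + (N - 1) / r * u' r + (v r) ^ p / lam = 0)
    (hODEv : ∀ r ∈ Set.Ioo a b, v'' r + (N - 1) / r * v' r + (u r) ^ q / lam = 0)
    (E : ℝ → ℝ)
    (hE : ∀ r ∈ Set.Ioo a b, E r = r ^ (N : ℝ) *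
      (u' r * v' r + (v r) ^ (p + 1) / (lam * (p + 1)) + (u r) ^ (q + 1) / (lam * (q + 1))
        + (N / (p + 1)) * v r * u' r / r + (N / (q + 1)) * u r * v' r / r)) :
    ∀ r ∈ Set.Ioo a b, HasDerivAt E
      (r ^ ((N : ℝ) - 1) * u' r * v' r * ((N : ℝ) / (p + 1) + (N : ℝ) / (q + 1) - ((N : ℝ) - 2))) r := by
  intro r hr
  obtain ⟨hra, hrb⟩ := hr
  have hrpos : 0 < r := ha.trans hra
  have hrne : r ≠ 0 := ne_of_gt hrpos
  have du := hu r ⟨hra, hrb⟩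
  have du' := hu' r ⟨hra, hrb⟩
  have dv := hv r ⟨hra, hrb⟩
  have dv' := hv' r ⟨hra, hrb⟩
  have hvne : v r ≠ 0 := ne_of_gt (hvpos r ⟨hra, hrb⟩)
  have hune : u r ≠ 0 := ne_of_gt (hupos r ⟨hra, hrb⟩)
  have hp1 : p + 1 ≠ 0 := by positivity
  have hq1 : q + 1 ≠ 0 := by positivity
  have hlamne : lam ≠ 0 := ne_of_gt hlam
  -- derivative of x ^ (N : ℝ)
  have h1 : HasDerivAt (fun x : ℝ => x ^ (N : ℝ)) ((N : ℝ) * r ^ ((N : ℝ) - 1)) r :=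
    Real.hasDerivAt_rpow_const (Or.inl hrne)
  have h2 : HasDerivAt (fun x => u' x * v' x) (u'' r * v' r + u' r * v'' r) r := du'.mul dv'
  have h3 : HasDerivAt (fun x => (v x) ^ (p + 1) / (lam * (p + 1)))
      (v' r * (p + 1) * (v r) ^ p / (lam * (p + 1))) r := by
    have h := (dv.rpow_const (p := p + 1) (Or.inl hvne)).div_const (lam * (p + 1))
    rwa [show p + 1 - 1 = p by ring] at h
  have h4 : HasDerivAt (fun x => (u x) ^ (q + 1) / (lam * (q + 1)))
      (u' r * (q + 1) * (u r) ^ q / (lam * (q + 1))) r := by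
    have h := (du.rpow_const (p := q + 1) (Or.inl hune)).div_const (lam * (q + 1))
    rwa [show q + 1 - 1 = q by ring] at h
  have h5 : HasDerivAt (fun x => ((N : ℝ) / (p + 1)) * v x * u' x / x)
      ((((((N : ℝ) / (p + 1)) * v' r) * u' r + (((N : ℝ) / (p + 1)) * v r) * u'' r) * r
        - ((N : ℝ) / (p + 1)) * v r * u' r * 1) / r ^ 2) r :=
    (((dv.const_mul ((N : ℝ) / (p + 1))).mul du').div (hasDerivAt_id r) hrne)
  have h6 : HasDerivAt (fun x => ((N : ℝ) / (q + 1)) * u x * v' x / x)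
      ((((((N : ℝ) / (q + 1)) * u' r) * v' r + (((N : ℝ) / (q + 1)) * u r) * v'' r) * r
        - ((N : ℝ) / (q + 1)) * u r * v' r * 1) / r ^ 2) r :=
    (((du.const_mul ((N : ℝ) / (q + 1))).mul dv').div (hasDerivAt_id r) hrne)
  have hF := h1.mul ((((h2.add h3).add h4).add h5).add h6)
  have hEF : E =ᶠ[nhds r] (fun x => x ^ (N : ℝ) *
      (u' x * v' x + (v x) ^ (p + 1) / (lam * (p + 1)) + (u x) ^ (q + 1) / (lam * (q + 1))
        + ((N : ℝ) / (p + 1)) * v x * u' x / x + ((N : ℝ) / (q + 1)) * u x * v' x / x)) := by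
    filter_upwards [isOpen_Ioo.mem_nhds ⟨hra, hrb⟩] with x hx
    exact hE x hx
  have hE' := hF.congr_of_eventuallyEq hEF
  refine hE'.congr_deriv ?_
  simp only [Pi.add_apply]
  -- algebraic identity
  have e1 := hODEu r ⟨hra, hrb⟩
  have e2 := hODEv r ⟨hra, hrb⟩
  have hu2 : u'' r = -(((N : ℝ) - 1) / r * u' r) - (v r) ^ p / lam := by linarith
  have hv2 : v'' r = -(((N : ℝ) - 1) / r * v' r) - (u r) ^ q / lam := by linarith
  have hvp1 : (v r) ^ (p + 1) = (v r) ^ p * v r := Real.rpow_add_one hvne p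
  have huq1 : (u r) ^ (q + 1) = (u r) ^ q * u r := Real.rpow_add_one hune q
  have hrN : r ^ (N : ℝ) = r ^ ((N : ℝ) - 1) * r := by
    rw [← Real.rpow_add_one hrne ((N : ℝ) - 1)]; ring_nf
  rw [hu2, hv2, hvp1, huq1, hrN]
  field_simp
  ring
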